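/- Let H be a finite connected simple graph, let v_1, …, v_k be vertices of H and let d_1, …, d_k be positive integers such that d_H(v_i, v_j) ≤ d_i + d_j for all i, j ∈ {1, …, k}. Let G be the graph obtained from H by adding one new vertex x and, for each i ∈ {1, …, k}, a new path of length d_i from x to v_i, where these k paths are internally disjoint from each other and their internal vertices are new vertices not in H. Then H is an isometric subgraph of G. -/

import Mathlib

/-- The graph obtained from `H` by adding one new vertex `x = Sum.inr (Sum.inr ())`
and, for each `i : Fin k`, a new path of length `d i` from `x` to `v i`, the `k`
paths being internally disjoint and their internal vertices being new.
An internal vertex `⟨(i, j), _⟩` (with `j + 1 < d i`, so there are `d i - 1` of them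
for the `i`-th path) is the vertex at distance `j + 1` from `x` on the `i`-th path. -/
def attachPaths {W : Type*} (H : SimpleGraph W) {k : ℕ} (v : Fin k → W)
    (d : Fin k → ℕ) :
    SimpleGraph (W ⊕ ({q : Fin k × ℕ // q.2 + 1 < d q.1} ⊕ Unit)) :=
  SimpleGraph.fromRel (fun a b =>
    match a, b with
    | Sum.inl a, Sum.inl b => H.Adj a b
    | Sum.inr (Sum.inr _), Sum.inr (Sum.inl q) => q.1.2 = 0
    | Sum.inr (Sum.inr _), Sum.inl w => ∃ i, d i = 1 ∧ w = v i
    | Sum.inr (Sum.inl q), Sum.inr (Sum.inl r) => q.1.1 = r.1.1 ∧ r.1.2 = q.1.2 + 1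
    | Sum.inr (Sum.inl q), Sum.inl w => q.1.2 + 2 = d q.1.1 ∧ w = v q.1.1
    | _, _ => False)

private lemma walk_phi_bound {V : Type*} {G : SimpleGraph V} (φ : V → ℕ)
    (hφ : ∀ u w, G.Adj u w → φ w ≤ φ u + 1) :
    ∀ {u w : V} (p : G.Walk u w), φ w ≤ φ u + p.length := by
  intro u w p
  induction p with
  | nil => simp
  | cons h p ih =>
    rename_i a b c
    calc φ c ≤ φ b + p.length := ih
    _ ≤ (φ a + 1) + p.length := by gcongr; exact hφ _ _ h
    _ = φ a + (p.cons h).length := by simp [SimpleGraph.Walk.length_cons]; ring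

/-- let `H` be a finite connected graph, `v 0, …, v (k-1)` vertices of
`H` and `d 0, …, d (k-1)` positive integers with `d_H(v i, v j) ≤ d i + d j` for all
`i, j`. Let `G` be obtained from `H` by adding a new vertex `x` and internally
disjoint paths of length `d i` from `x` to each `v i` (with new internal vertices).
Then `H` is an isometric subgraph of `G`. -/
theorem attachPaths_isometric {W : Type*} [Fintype W] (H : SimpleGraph W)
    (hH : H.Connected) (k : ℕ) (v : Fin k → W) (d : Fin k → ℕ)
    (hd : ∀ i, 1 ≤ d i) (hdist : ∀ i j, H.dist (v i) (v j) ≤ d i + d j) :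
    ∀ a b : W, (attachPaths H v d).dist (Sum.inl a) (Sum.inl b) = H.dist a b := by
  intro a b
  set G := attachPaths H v d with hG
  -- the embedding of `H` into `G`
  have hhom : ∀ {x y : W}, H.Adj x y → G.Adj (Sum.inl x) (Sum.inl y) := by
    intro x y hxy
    rw [hG, attachPaths, SimpleGraph.fromRel_adj]
    exact ⟨by simpa using hxy.ne, Or.inl hxy⟩
  let f : H →g G := ⟨Sum.inl, hhom⟩
  -- upper bound
  obtain ⟨p, hp⟩ := hH.exists_walk_length_eq_dist a b
  have hub : G.dist (Sum.inl a) (Sum.inl b) ≤ H.dist a b := by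
    have := SimpleGraph.dist_le (p.map f)
    exact (by simpa [hp] using this : G.dist (f a) (f b) ≤ H.dist a b)
  -- the potential function
  set M : ℕ := sInf {n | ∃ i, H.dist a (v i) + d i = n} with hMdef
  have hM_le : ∀ i, M ≤ H.dist a (v i) + d i := fun i => Nat.sInf_le ⟨i, rfl⟩
  have hM_ge : ∀ i : Fin k, ∃ j, M = H.dist a (v j) + d j := by
    intro i
    have : M ∈ {n | ∃ i, H.dist a (v i) + d i = n} :=
      Nat.sInf_mem ⟨_, i, rfl⟩
    obtain ⟨j, hj⟩ := this
    exact ⟨j, hj.symm⟩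
  -- key: dist a (v i) ≤ M + d i, for any i (given k > 0)
  have hkey : ∀ i : Fin k, H.dist a (v i) ≤ M + d i := by
    intro i
    obtain ⟨j, hj⟩ := hM_ge i
    calc H.dist a (v i) ≤ H.dist a (v j) + H.dist (v j) (v i) := hH.dist_triangle
    _ ≤ H.dist a (v j) + (d j + d i) := by gcongr; exact hdist j i
    _ = M + d i := by omega
  set φ : (W ⊕ ({q : Fin k × ℕ // q.2 + 1 < d q.1} ⊕ Unit)) → ℕ :=
    fun z => match z with
    | Sum.inl w => H.dist a w
    | Sum.inr (Sum.inr _) => M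
    | Sum.inr (Sum.inl q) =>
        min (M + (q.1.2 + 1)) (H.dist a (v q.1.1) + (d q.1.1 - 1 - q.1.2))
    with hφdef
  -- adjacent vertices in H have dists differing by ≤ 1
  have hadj1 : ∀ {x y : W}, H.Adj x y → H.dist a y ≤ H.dist a x + 1 := by
    intro x y hxy
    obtain ⟨q, hq⟩ := hH.exists_walk_length_eq_dist a x
    have := SimpleGraph.dist_le (q.concat hxy)
    simpa [SimpleGraph.Walk.length_concat, hq] using this
  -- Lipschitz property of φ
  have hφ : ∀ u w, G.Adj u w → φ w ≤ φ u + 1 := by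
    have base : ∀ u w, (fun a b =>
      match a, b with
      | Sum.inl a, Sum.inl b => H.Adj a b
      | Sum.inr (Sum.inr _), Sum.inr (Sum.inl q) => q.1.2 = 0
      | Sum.inr (Sum.inr _), Sum.inl w => ∃ i, d i = 1 ∧ w = v i
      | Sum.inr (Sum.inl q), Sum.inr (Sum.inl r) => q.1.1 = r.1.1 ∧ r.1.2 = q.1.2 + 1
      | Sum.inr (Sum.inl q), Sum.inl w => q.1.2 + 2 = d q.1.1 ∧ w = v q.1.1
      | _, _ => False) u w → φ w ≤ φ u + 1 ∧ φ u ≤ φ w + 1 := by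
      rintro (u | (⟨⟨i, j⟩, hq⟩ | u)) (w | (⟨⟨i', j'⟩, hr⟩ | w)) h <;>
          simp only at h
      · -- inl, inl
        exact ⟨hadj1 h, hadj1 h.symm⟩
      · -- internal q, inl w : q.2 + 2 = d q.1 ∧ w = v q.1
        obtain ⟨h1, h2⟩ := h
        subst h2
        simp only [hφdef]
        have := hkey i
        have := hM_le i
        omega
      · -- internal q, internal r
        obtain ⟨h1, h2⟩ := h
        subst h1
        subst h2
        simp only [hφdef]
        omega
      · -- x, inl w : ∃ i, d i = 1 ∧ w = v i
        obtain ⟨i, h1, h2⟩ := h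
        subst h2
        simp only [hφdef]
        constructor
        · calc H.dist a (v i) ≤ M + d i := hkey i
          _ = M + 1 := by omega
        · calc M ≤ H.dist a (v i) + d i := hM_le i
          _ = H.dist a (v i) + 1 := by omega
      · -- x, internal q : q.2 = 0
        subst h
        simp only [hφdef]
        have := hM_le i'
        omega
    intro u w huw
    rw [hG, attachPaths, SimpleGraph.fromRel_adj] at huw
    obtain ⟨-, h | h⟩ := huw
    · exact (base u w h).1
    · exact (base w u h).2
  -- lower bound
  have hreach : G.Reachable (Sum.inl a) (Sum.inl b) := ⟨p.map f⟩
  obtain ⟨q, hq⟩ := hreach.exists_walk_length_eq_dist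
  have hlb : H.dist a b ≤ G.dist (Sum.inl a) (Sum.inl b) := by
    have := walk_phi_bound φ hφ q
    simpa [hφdef, hq, SimpleGraph.dist_self] using this
  omega
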